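/- Let μ be a Borel probability measure on (S, d) with ∫ (p₁² + p₂²) μ(d(p₁, p₂, θ)) < ∞. Define F(x̂) = ∫_S d(x, x̂)² μ(dx), p̂₁ = ∫ p₁ dμ, p̂₂ = ∫ p₂ dμ, c̄ = ∫ cos θ dμ, s̄ = ∫ sin θ dμ, and α = c̄² + s̄². If α > 0, then there is a unique θ̂ ∈ [0, 2π) with cos θ̂ = c̄/√α and sin θ̂ = s̄/√α, and the point x̂* = (p̂₁, p̂₂, θ̂) minimizes F over S: F(x̂*) ≤ F(ŷ) for every ŷ ∈ S. -/

import Mathlib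

set_option maxHeartbeats 1000000


open MeasureTheory
open scoped ENNReal

noncomputable section

/-- The state space `S = ℝ² × [0, 2π)`. -/
abbrev S : Type := {x : ℝ × ℝ × ℝ // x.2.2 ∈ Set.Ico (0 : ℝ) (2 * Real.pi)}

/-- The metric `d` on `S`. -/
noncomputable def dS (x y : S) : ℝ :=
  Real.sqrt ((x.1.1 - y.1.1) ^ 2 + (x.1.2.1 - y.1.2.1) ^ 2
    + 2 * (Real.cos x.1.2.2 - Real.cos y.1.2.2) ^ 2
    + 2 * (Real.sin x.1.2.2 - Real.sin y.1.2.2) ^ 2)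

/-- The distortion functional `F(x̂) = ∫ d(x, x̂)² μ(dx)`. -/
noncomputable def FF (μ : Measure S) (z : S) : ℝ≥0∞ :=
  ∫⁻ x, ENNReal.ofReal (dS x z ^ 2) ∂μ

/-- If `α = c̄² + s̄² > 0`, there is a unique `θ̂ ∈ [0, 2π)` with
`cos θ̂ = c̄/√α`, `sin θ̂ = s̄/√α`, and `(p̂₁, p̂₂, θ̂)` minimizes `F` over `S`. -/
theorem optimal_estimate_of_alpha_pos (μ : Measure S) [IsProbabilityMeasure μ]
    (hmom : ∫⁻ x, ENNReal.ofReal (x.1.1 ^ 2 + x.1.2.1 ^ 2) ∂μ < ⊤)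
    (p1 p2 cbar sbar : ℝ)
    (hp1 : p1 = ∫ x, x.1.1 ∂μ) (hp2 : p2 = ∫ x, x.1.2.1 ∂μ)
    (hc : cbar = ∫ x, Real.cos x.1.2.2 ∂μ) (hs : sbar = ∫ x, Real.sin x.1.2.2 ∂μ)
    (hα : 0 < cbar ^ 2 + sbar ^ 2) :
    (∃! θ : ℝ, θ ∈ Set.Ico (0 : ℝ) (2 * Real.pi) ∧
        Real.cos θ = cbar / Real.sqrt (cbar ^ 2 + sbar ^ 2) ∧
        Real.sin θ = sbar / Real.sqrt (cbar ^ 2 + sbar ^ 2)) ∧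
    (∀ xstar : S, xstar.1.1 = p1 → xstar.1.2.1 = p2 →
        Real.cos xstar.1.2.2 = cbar / Real.sqrt (cbar ^ 2 + sbar ^ 2) →
        Real.sin xstar.1.2.2 = sbar / Real.sqrt (cbar ^ 2 + sbar ^ 2) →
        ∀ y : S, FF μ xstar ≤ FF μ y) := by
  set r : ℝ := Real.sqrt (cbar ^ 2 + sbar ^ 2) with hrdef
  have hr2 : r ^ 2 = cbar ^ 2 + sbar ^ 2 := Real.sq_sqrt hα.le
  have hrpos : 0 < r := Real.sqrt_pos.mpr hα
  have hpi := Real.pi_pos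
  constructor
  · -- uniqueness part
    set c' : ℝ := cbar / r with hc'
    set s' : ℝ := sbar / r with hs'
    have hcs : c' ^ 2 + s' ^ 2 = 1 := by
      rw [hc', hs', div_pow, div_pow, ← add_div, hr2]
      exact div_self hα.ne'
    set z : ℂ := ⟨c', s'⟩ with hz
    have hzabs : ‖z‖ = 1 := by
      rw [Complex.norm_def, hz, Complex.normSq_mk]
      rw [show c' * c' + s' * s' = 1 by nlinarith [hcs]]
      exact Real.sqrt_one
    have hz0 : z ≠ 0 := by
      intro h
      rw [h] at hzabs; simp at hzabs
    have hcosarg : Real.cos z.arg = c' := by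
      rw [Complex.cos_arg hz0, hzabs]; simp [hz]
    have hsinarg : Real.sin z.arg = s' := by
      rw [Complex.sin_arg, hzabs]; simp [hz]
    have harg := Complex.arg_mem_Ioc z
    refine ⟨if 0 ≤ z.arg then z.arg else z.arg + 2 * Real.pi, ⟨?_, ?_, ?_⟩, ?_⟩
    · split_ifs with h
      · exact ⟨h, by linarith [harg.2]⟩
      · constructor <;> [skip; skip] <;> push_neg at h <;>
          [linarith [harg.1]; linarith [harg.1]]
    · split_ifs with h
      · exact hcosarg
      · rw [Real.cos_add_two_pi]; exact hcosarg
    · split_ifs with h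
      · exact hsinarg
      · rw [Real.sin_add_two_pi]; exact hsinarg
    · rintro θ ⟨hθmem, hθc, hθs⟩
      -- uniqueness: any two θ₁ θ₂ in Ico with same cos/sin are equal
      have key : ∀ a b : ℝ, a ∈ Set.Ico (0:ℝ) (2 * Real.pi) →
          b ∈ Set.Ico (0:ℝ) (2 * Real.pi) →
          Real.cos a = c' → Real.sin a = s' →
          Real.cos b = c' → Real.sin b = s' → a = b := by
        intro a b ha hb hca hsa hcb hsb
        have h1 : Real.cos (a - b) = 1 := by
          rw [Real.cos_sub, hca, hsa, hcb, hsb]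
          nlinarith [hcs]
        rw [Real.cos_eq_one_iff] at h1
        obtain ⟨n, hn⟩ := h1
        have hn0 : n = 0 := by
          have h2 : -(2 * Real.pi) < (n : ℝ) * (2 * Real.pi) := by
            rw [hn]; linarith [ha.1, ha.2, hb.1, hb.2]
          have h3 : (n : ℝ) * (2 * Real.pi) < 2 * Real.pi := by
            rw [hn]; linarith [ha.1, ha.2, hb.1, hb.2]
          have h4 : (-1 : ℝ) < (n : ℝ) := by nlinarith
          have h5 : (n : ℝ) < 1 := by nlinarith
          have h4' : (-1 : ℤ) < n := by exact_mod_cast h4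
          have h5' : n < (1 : ℤ) := by exact_mod_cast h5
          omega
        rw [hn0] at hn
        simp at hn
        linarith
      refine key θ _ hθmem ?_ hθc hθs ?_ ?_
      · split_ifs with h
        · exact ⟨h, by linarith [harg.2]⟩
        · push_neg at h; exact ⟨by linarith [harg.1], by linarith [harg.1]⟩
      · split_ifs with h
        · exact hcosarg
        · rw [Real.cos_add_two_pi]; exact hcosarg
      · split_ifs with h
        · exact hsinarg
        · rw [Real.sin_add_two_pi]; exact hsinarg
  · -- minimization part
    have hm1 : Measurable (fun x : S => x.1.1) :=
      measurable_fst.comp measurable_subtype_coe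
    have hm2 : Measurable (fun x : S => x.1.2.1) :=
      (measurable_fst.comp measurable_snd).comp measurable_subtype_coe
    have hmθ : Measurable (fun x : S => x.1.2.2) :=
      (measurable_snd.comp measurable_snd).comp measurable_subtype_coe
    have hInt2 : Integrable (fun x : S => x.1.1 ^ 2 + x.1.2.1 ^ 2) μ := by
      refine ⟨((hm1.pow_const 2).add (hm2.pow_const 2)).aestronglyMeasurable, ?_⟩
      rw [hasFiniteIntegral_iff_ofReal (ae_of_all _ fun x => by positivity)]
      exact hmom
    have hInt1 : Integrable (fun x : S => x.1.1) μ := by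
      refine (hInt2.add (integrable_const 1)).mono' hm1.aestronglyMeasurable
        (ae_of_all _ fun x => ?_)
      simp only [Real.norm_eq_abs, Pi.add_apply]
      rcases abs_cases x.1.1 with ⟨h, _⟩ | ⟨h, _⟩ <;> nlinarith [sq_nonneg x.1.2.1, sq_nonneg (x.1.1 - 1), sq_nonneg (x.1.1 + 1)]
    have hInt1' : Integrable (fun x : S => x.1.2.1) μ := by
      refine (hInt2.add (integrable_const 1)).mono' hm2.aestronglyMeasurable
        (ae_of_all _ fun x => ?_)
      simp only [Real.norm_eq_abs, Pi.add_apply]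
      rcases abs_cases x.1.2.1 with ⟨h, _⟩ | ⟨h, _⟩ <;> nlinarith [sq_nonneg x.1.1, sq_nonneg (x.1.2.1 - 1), sq_nonneg (x.1.2.1 + 1)]
    have hIntcos : Integrable (fun x : S => Real.cos x.1.2.2) μ := by
      refine (integrable_const 1).mono' (Real.measurable_cos.comp hmθ).aestronglyMeasurable
        (ae_of_all _ fun x => ?_)
      simp [Real.norm_eq_abs, Real.abs_cos_le_one]
    have hIntsin : Integrable (fun x : S => Real.sin x.1.2.2) μ := by
      refine (integrable_const 1).mono' (Real.measurable_sin.comp hmθ).aestronglyMeasurable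
        (ae_of_all _ fun x => ?_)
      simp [Real.norm_eq_abs, Real.abs_sin_le_one]
    set I2 : ℝ := ∫ x, (x.1.1 ^ 2 + x.1.2.1 ^ 2) ∂μ with hI2
    have expand : ∀ z : S, (fun x : S => dS x z ^ 2) = fun x : S =>
        (x.1.1 ^ 2 + x.1.2.1 ^ 2) + ((-2 * z.1.1) * x.1.1 +
          ((-2 * z.1.2.1) * x.1.2.1 + ((-4 * Real.cos z.1.2.2) * Real.cos x.1.2.2 +
            ((-4 * Real.sin z.1.2.2) * Real.sin x.1.2.2 +
              (z.1.1 ^ 2 + z.1.2.1 ^ 2 + 4))))) := by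
      intro z; funext x
      rw [dS, Real.sq_sqrt (by positivity)]
      have h1 := Real.sin_sq_add_cos_sq x.1.2.2
      have h2 := Real.sin_sq_add_cos_sq z.1.2.2
      linear_combination 2 * h1 + 2 * h2
    have hIntd : ∀ z : S, Integrable (fun x : S => dS x z ^ 2) μ := by
      intro z
      rw [expand z]
      exact hInt2.add ((hInt1.const_mul _).add ((hInt1'.const_mul _).add
        ((hIntcos.const_mul _).add ((hIntsin.const_mul _).add (integrable_const _)))))
    have key : ∀ z : S, ∫ x, dS x z ^ 2 ∂μ =
        I2 + (-2 * z.1.1) * p1 + (-2 * z.1.2.1) * p2 +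
          (-4 * Real.cos z.1.2.2) * cbar + (-4 * Real.sin z.1.2.2) * sbar +
          (z.1.1 ^ 2 + z.1.2.1 ^ 2 + 4) := by
      intro z
      have h5 : Integrable (fun x : S => (-4 * Real.sin z.1.2.2) * Real.sin x.1.2.2 +
          (z.1.1 ^ 2 + z.1.2.1 ^ 2 + 4)) μ := (hIntsin.const_mul _).add (integrable_const _)
      have h4 : Integrable (fun x : S => (-4 * Real.cos z.1.2.2) * Real.cos x.1.2.2 +
          ((-4 * Real.sin z.1.2.2) * Real.sin x.1.2.2 + (z.1.1 ^ 2 + z.1.2.1 ^ 2 + 4))) μ :=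
        (hIntcos.const_mul _).add h5
      have h3 : Integrable (fun x : S => (-2 * z.1.2.1) * x.1.2.1 +
          ((-4 * Real.cos z.1.2.2) * Real.cos x.1.2.2 +
            ((-4 * Real.sin z.1.2.2) * Real.sin x.1.2.2 + (z.1.1 ^ 2 + z.1.2.1 ^ 2 + 4)))) μ :=
        (hInt1'.const_mul _).add h4
      have h2 : Integrable (fun x : S => (-2 * z.1.1) * x.1.1 +
          ((-2 * z.1.2.1) * x.1.2.1 + ((-4 * Real.cos z.1.2.2) * Real.cos x.1.2.2 +
            ((-4 * Real.sin z.1.2.2) * Real.sin x.1.2.2 + (z.1.1 ^ 2 + z.1.2.1 ^ 2 + 4))))) μ :=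
        (hInt1.const_mul _).add h3
      rw [expand z]
      rw [integral_add hInt2 h2, integral_add (hInt1.const_mul _) h3,
        integral_add (hInt1'.const_mul _) h4, integral_add (hIntcos.const_mul _) h5,
        integral_add (hIntsin.const_mul _) (integrable_const _),
        integral_const_mul, integral_const_mul, integral_const_mul, integral_const_mul,
        integral_const, probReal_univ, one_smul]
      rw [hp1, hp2, hc, hs]
      ring
    have FFeq : ∀ z : S, FF μ z = ENNReal.ofReal (∫ x, dS x z ^ 2 ∂μ) := by
      intro z
      rw [FF, ← ofReal_integral_eq_lintegral_ofReal (hIntd z)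
        (ae_of_all _ fun x => by positivity)]
    intro xstar hx1 hx2 hxc hxs y
    rw [FFeq, FFeq]
    apply ENNReal.ofReal_le_ofReal
    rw [key, key]
    have hxst : Real.cos xstar.1.2.2 * cbar + Real.sin xstar.1.2.2 * sbar = r := by
      rw [hxc, hxs]
      field_simp
      linarith [hr2]
    have hybd : Real.cos y.1.2.2 * cbar + Real.sin y.1.2.2 * sbar ≤ r := by
      nlinarith [sq_nonneg (cbar * Real.sin y.1.2.2 - sbar * Real.cos y.1.2.2),
        Real.sin_sq_add_cos_sq y.1.2.2, hr2, hrpos,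
        sq_nonneg (r - (Real.cos y.1.2.2 * cbar + Real.sin y.1.2.2 * sbar)),
        sq_nonneg (r + (Real.cos y.1.2.2 * cbar + Real.sin y.1.2.2 * sbar))]
    rw [hx1, hx2]
    nlinarith [sq_nonneg (y.1.1 - p1), sq_nonneg (y.1.2.1 - p2), hxst, hybd]


end
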